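/- Let h : [0,1] × ℝ → ℝⁿ be continuous, 1-periodic in the second variable, with ∫₀¹ h(x, z) dz = 0 for every x ∈ [0,1]. Then for all x ∈ [0,1] and ε > 0, ‖∫₀ˣ h(y, y/ε) dy‖ ≤ ε(⌊x/ε⌋ ω_h(ε) + ‖h‖_*), where ω_h(ε) := sup{‖h(x₁,y) − h(x₂,y)‖ : |x₁−x₂| ≤ ε, y ∈ ℝ} and ‖h‖_* := sup ‖h‖. -/

import Mathlib

open Set

theorem stmt4 {n : ℕ} (h : ℝ → ℝ → EuclideanSpace ℝ (Fin n))
    (hcont : ContinuousOn (fun p : ℝ × ℝ => h p.1 p.2) (Icc 0 1 ×ˢ (univ : Set ℝ)))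
    (hper : ∀ x ∈ Icc (0:ℝ) 1, ∀ y : ℝ, h x (y + 1) = h x y)
    (hmean : ∀ x ∈ Icc (0:ℝ) 1, (∫ z in (0:ℝ)..1, h x z) = 0)
    (ε : ℝ) (hε : 0 < ε) (ω C : ℝ)
    (hω : ∀ x₁ ∈ Icc (0:ℝ) 1, ∀ x₂ ∈ Icc (0:ℝ) 1, ∀ y : ℝ,
      |x₁ - x₂| ≤ ε → ‖h x₁ y - h x₂ y‖ ≤ ω)
    (hC : ∀ x ∈ Icc (0:ℝ) 1, ∀ y : ℝ, ‖h x y‖ ≤ C) :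
    ∀ x ∈ Icc (0:ℝ) 1,
      ‖∫ y in (0:ℝ)..x, h y (y / ε)‖ ≤ ε * ((⌊x / ε⌋₊ : ℝ) * ω + C) := by
  intro x hx
  obtain ⟨hx0, hx1⟩ := hx
  -- continuity of y ↦ h y (y/ε) on [0,1]
  have hcont1 : ContinuousOn (fun y : ℝ => h y (y / ε)) (Icc 0 1) := by
    have : ContinuousOn (fun y : ℝ => (y, y / ε)) (Icc 0 1) :=
      (continuous_id.prodMk (continuous_id.div_const ε)).continuousOn
    exact hcont.comp this (fun y hy => ⟨hy, mem_univ _⟩)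
  have hInt : ∀ a b : ℝ, a ∈ Icc (0:ℝ) 1 → b ∈ Icc (0:ℝ) 1 →
      IntervalIntegrable (fun y => h y (y / ε)) MeasureTheory.volume a b := by
    intro a b ha hb
    exact (hcont1.mono (uIcc_subset_Icc ha hb)).intervalIntegrable
  have hcontc : ∀ c ∈ Icc (0:ℝ) 1, Continuous (fun z : ℝ => h c z) := by
    intro c hc
    rw [← continuousOn_univ]
    have : ContinuousOn (fun z : ℝ => ((c, z) : ℝ × ℝ)) univ :=
      (continuous_const.prodMk continuous_id).continuousOn
    exact hcont.comp this (fun z _ => ⟨hc, mem_univ _⟩)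
  set N := ⌊x / ε⌋₊ with hN
  have hNle : (N : ℝ) * ε ≤ x := by
    have := Nat.floor_le (div_nonneg hx0 hε.le)
    calc (N : ℝ) * ε ≤ (x / ε) * ε := by nlinarith
    _ = x := div_mul_cancel₀ x hε.ne'
  have hxlt : x < ((N : ℝ) + 1) * ε := by
    have := Nat.lt_floor_add_one (x / ε)
    calc x = (x / ε) * ε := (div_mul_cancel₀ x hε.ne').symm
    _ < ((N : ℝ) + 1) * ε := by nlinarith
  have hmem : ∀ k : ℕ, k ≤ N → (k : ℝ) * ε ∈ Icc (0:ℝ) 1 := by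
    intro k hk
    constructor
    · positivity
    · calc (k : ℝ) * ε ≤ (N : ℝ) * ε := by
            have : (k : ℝ) ≤ N := by exact_mod_cast hk
            nlinarith
      _ ≤ x := hNle
      _ ≤ 1 := hx1
  have hω0 : 0 ≤ ω := by
    have := hω 0 ⟨le_refl 0, zero_le_one⟩ 0 ⟨le_refl 0, zero_le_one⟩ 0 (by simp [hε.le])
    simpa using this
  have hC0 : 0 ≤ C := le_trans (norm_nonneg _) (hC 0 ⟨le_refl 0, zero_le_one⟩ 0)
  -- per-interval bound
  have key : ∀ k : ℕ, k < N →
      ‖∫ y in ((k:ℝ)*ε)..(((k:ℝ)+1)*ε), h y (y / ε)‖ ≤ ε * ω := by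
    intro k hk
    have hk1 : ((k:ℝ)+1) * ε ∈ Icc (0:ℝ) 1 := by
      have := hmem (k+1) hk
      push_cast at this ⊢
      exact this
    have hk0 : (k:ℝ) * ε ∈ Icc (0:ℝ) 1 := hmem k hk.le
    have hcck : Continuous (fun z : ℝ => h ((k:ℝ)*ε) z) := hcontc _ hk0
    have hIntc : IntervalIntegrable (fun y => h ((k:ℝ)*ε) (y / ε))
        MeasureTheory.volume ((k:ℝ)*ε) (((k:ℝ)+1)*ε) :=
      (hcck.comp (continuous_id.div_const ε)).intervalIntegrable _ _
    have hzero : (∫ y in ((k:ℝ)*ε)..(((k:ℝ)+1)*ε), h ((k:ℝ)*ε) (y / ε)) = 0 := by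
      rw [intervalIntegral.integral_comp_div (c := ε) (fun z => h ((k:ℝ)*ε) z) hε.ne']
      have h1 : ((k:ℝ)*ε)/ε = (k:ℝ) := by field_simp
      have h2 : (((k:ℝ)+1)*ε)/ε = (k:ℝ)+1 := by field_simp
      rw [h1, h2]
      have hperk : Function.Periodic (fun z => h ((k:ℝ)*ε) z) 1 := fun z => hper _ hk0 z
      have := hperk.intervalIntegral_add_eq (k:ℝ) 0
      rw [this]
      simp only [zero_add]
      rw [hmean _ hk0]
      simp
    have hsplit : (∫ y in ((k:ℝ)*ε)..(((k:ℝ)+1)*ε), h y (y / ε))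
        = ∫ y in ((k:ℝ)*ε)..(((k:ℝ)+1)*ε), (h y (y / ε) - h ((k:ℝ)*ε) (y / ε)) := by
      rw [intervalIntegral.integral_sub (hInt _ _ hk0 hk1) hIntc, hzero, sub_zero]
    rw [hsplit]
    have hle : ‖∫ y in ((k:ℝ)*ε)..(((k:ℝ)+1)*ε), (h y (y / ε) - h ((k:ℝ)*ε) (y / ε))‖
        ≤ ω * |(((k:ℝ)+1)*ε) - ((k:ℝ)*ε)| := by
      apply intervalIntegral.norm_integral_le_of_norm_le_const
      intro y hy
      rw [uIoc_of_le (by nlinarith)] at hy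
      have hy1 : y ∈ Icc (0:ℝ) 1 := by
        constructor
        · have := hy.1; have : (0:ℝ) ≤ (k:ℝ)*ε := by positivity
          linarith [hy.1]
        · linarith [hy.2, hk1.2]
      apply hω y hy1 _ hk0
      rw [abs_le]
      constructor <;> [linarith [hy.1]; linarith [hy.2]]
    have habs : |(((k:ℝ)+1)*ε) - ((k:ℝ)*ε)| = ε := by
      rw [abs_of_nonneg (by nlinarith)]; ring
    rw [habs] at hle
    linarith
  -- decompose the integral
  have hdecomp : (∫ y in (0:ℝ)..x, h y (y / ε))
      = (∑ k ∈ Finset.range N, ∫ y in ((k:ℝ)*ε)..(((k:ℝ)+1)*ε), h y (y / ε))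
        + ∫ y in ((N:ℝ)*ε)..x, h y (y / ε) := by
    have hsum := intervalIntegral.sum_integral_adjacent_intervals
      (a := fun k : ℕ => (k:ℝ) * ε) (f := fun y => h y (y / ε)) (n := N) (μ := MeasureTheory.volume) ?_
    · have e0 : ((0:ℕ):ℝ) * ε = 0 := by simp
      rw [show (∑ k ∈ Finset.range N, ∫ y in ((k:ℝ)*ε)..(((k:ℝ)+1)*ε), h y (y / ε))
          = ∑ k ∈ Finset.range N, ∫ y in (((k:ℕ):ℝ)*ε)..((((k+1:ℕ)):ℝ)*ε), h y (y / ε) by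
        apply Finset.sum_congr rfl; intro k _; push_cast; ring_nf]
      rw [hsum, e0]
      rw [intervalIntegral.integral_add_adjacent_intervals]
      · exact hInt _ _ ⟨le_refl 0, zero_le_one⟩ (hmem N le_rfl)
      · exact hInt _ _ (hmem N le_rfl) ⟨hx0, hx1⟩
    · intro k hk
      have hk1 : ((k+1:ℕ):ℝ) * ε ∈ Icc (0:ℝ) 1 := hmem (k+1) hk
      exact hInt _ _ (hmem k hk.le) hk1
  rw [hdecomp]
  have hrem : ‖∫ y in ((N:ℝ)*ε)..x, h y (y / ε)‖ ≤ ε * C := by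
    have hle : ‖∫ y in ((N:ℝ)*ε)..x, h y (y / ε)‖ ≤ C * |x - (N:ℝ)*ε| := by
      apply intervalIntegral.norm_integral_le_of_norm_le_const
      intro y hy
      rw [uIoc_of_le hNle] at hy
      have hy1 : y ∈ Icc (0:ℝ) 1 := by
        constructor
        · have : (0:ℝ) ≤ (N:ℝ)*ε := by positivity
          linarith [hy.1]
        · linarith [hy.2]
      exact hC y hy1 _
    have : |x - (N:ℝ)*ε| ≤ ε := by
      rw [abs_of_nonneg (by linarith)]
      nlinarith
    nlinarith
  have hsum : ‖∑ k ∈ Finset.range N, ∫ y in ((k:ℝ)*ε)..(((k:ℝ)+1)*ε), h y (y / ε)‖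
      ≤ (N : ℝ) * (ε * ω) := by
    calc ‖∑ k ∈ Finset.range N, ∫ y in ((k:ℝ)*ε)..(((k:ℝ)+1)*ε), h y (y / ε)‖
        ≤ ∑ k ∈ Finset.range N, ‖∫ y in ((k:ℝ)*ε)..(((k:ℝ)+1)*ε), h y (y / ε)‖ :=
          norm_sum_le _ _
      _ ≤ ∑ k ∈ Finset.range N, (ε * ω) :=
          Finset.sum_le_sum (fun k hk => key k (Finset.mem_range.mp hk))
      _ = (N : ℝ) * (ε * ω) := by simp [mul_comm]
  calc ‖(∑ k ∈ Finset.range N, ∫ y in ((k:ℝ)*ε)..(((k:ℝ)+1)*ε), h y (y / ε))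
        + ∫ y in ((N:ℝ)*ε)..x, h y (y / ε)‖
      ≤ ‖∑ k ∈ Finset.range N, ∫ y in ((k:ℝ)*ε)..(((k:ℝ)+1)*ε), h y (y / ε)‖
        + ‖∫ y in ((N:ℝ)*ε)..x, h y (y / ε)‖ := norm_add_le _ _
    _ ≤ (N : ℝ) * (ε * ω) + ε * C := add_le_add hsum hrem
    _ = ε * ((N : ℝ) * ω + C) := by ring
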